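/- For all real numbers 0 < p < ∞ and 0 < q < ∞ and integers 1 ≤ l ≤ k with l = 1/q − 1/p, there exist a constant c = c(k, p, q) > 0 and an integer N = N(k, p, q) such that for every integer n ≥ N there exists a polynomial P ∈ Δ_n^{(k)} with ‖P‖_{L_p[−1,1]} > 0 and ‖P^{(l)}‖_{L_q[−1,1]} ≥ c · (log n)^l · ‖P‖_{L_p[−1,1]}. -/

import Mathlib

open Polynomial MeasureTheory

/-- The `L_q` quasinorm of `f` on `[a,b]` for `0 < q < ∞`. -/
noncomputable def LqNorm (f : ℝ → ℝ) (q a b : ℝ) : ℝ :=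
  (∫ x in a..b, |f x| ^ q) ^ (1 / q)

/-- The sup norm of `f` on `[a,b]`. -/
noncomputable def LinfNorm (f : ℝ → ℝ) (a b : ℝ) : ℝ :=
  sSup ((fun x => |f x|) '' Set.Icc a b)

/-- The `L_q` norm on `[a,b]` for `0 < q ≤ ∞`, `q : ℝ≥0∞`. -/
noncomputable def Lnorm (f : ℝ → ℝ) (q : ENNReal) (a b : ℝ) : ℝ :=
  if q = ⊤ then LinfNorm f a b else LqNorm f q.toReal a b

/-- `P ∈ Δ_n^(k)`: a real polynomial of degree at most `n` all of whose derivatives of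
order `0 ≤ m ≤ k` are nonnegative on `[-1,1]`. -/
def AbsMono (P : Polynomial ℝ) (n k : ℕ) : Prop :=
  P.natDegree ≤ n ∧
    ∀ m ≤ k, ∀ x ∈ Set.Icc (-1 : ℝ) 1, 0 ≤ (derivative^[m] P).eval x

open Finset


def ss (L j : ℕ) : ℕ := L * 4 ^ (j + 1)

lemma ss_pos {L : ℕ} (hL : 1 ≤ L) (j : ℕ) : 0 < ss L j :=
  Nat.mul_pos hL (Nat.pow_pos (by norm_num))

lemma ss_succ (L j : ℕ) : ss L (j + 1) = 4 * ss L j := by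
  unfold ss; rw [pow_succ]; ring

noncomputable def hh (α : ℝ) (L : ℕ) (u : ℝ) (j : ℕ) : ℝ :=
  ((ss L j : ℕ) : ℝ) ^ α * u ^ (ss L j)

noncomputable def rr (α : ℝ) (L : ℕ) (u : ℝ) (j : ℕ) : ℝ :=
  (4 : ℝ) ^ α * u ^ (3 * ss L j)

noncomputable def Cpt (α : ℝ) : ℝ :=
  1 / (1 - ((4:ℝ) ^ ((3*α)/4))⁻¹) + 1 + 1 / (1 - (4:ℝ) ^ (-(3*α)))

lemma hh_succ (α : ℝ) (L : ℕ) (u : ℝ) (j : ℕ) :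
    hh α L u (j + 1) = rr α L u j * hh α L u j := by
  unfold hh rr
  rw [ss_succ]
  push_cast
  rw [Real.mul_rpow (by norm_num) (by positivity)]
  rw [show 4 * ss L j = 3 * ss L j + ss L j by ring, pow_add]
  ring

lemma four_rpow_three (α : ℝ) : (4:ℝ) ^ (3*α) = ((4:ℝ) ^ α) ^ (3:ℕ) := by
  rw [← Real.rpow_natCast ((4:ℝ)^α) 3, ← Real.rpow_mul (by norm_num)]
  norm_num [mul_comm]

lemma rr_id (α : ℝ) (L : ℕ) (u : ℝ) (j : ℕ) :
    rr α L u j ^ 4 = (4:ℝ) ^ (3*α) * rr α L u (j+1) := by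
  unfold rr
  rw [ss_succ, four_rpow_three, mul_pow, ← pow_mul,
    show 3 * (4 * ss L j) = 3 * ss L j * 4 by ring]
  ring


lemma geomSumLe (r : ℝ) (h0 : 0 ≤ r) (h1 : r < 1) (n : ℕ) :
    ∑ i ∈ Finset.range n, r ^ i ≤ 1 / (1 - r) := by
  have hg := geom_sum_mul r n
  have hp : (0:ℝ) ≤ r ^ n := pow_nonneg h0 n
  rw [le_div_iff₀ (by linarith)]
  nlinarith

set_option maxHeartbeats 1000000 in
lemma ptwise (α : ℝ) (hα : 0 < α) (L m : ℕ) (hL : 1 ≤ L) (hm : 1 ≤ m)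
    (u : ℝ) (hu0 : 0 ≤ u) (hu1 : u ≤ 1) :
    ∃ j0 ∈ range m, ∑ j ∈ range m, hh α L u j ≤ Cpt α * hh α L u j0 := by
  set lam : ℝ := (4:ℝ) ^ ((3*α)/4) with hlamdef
  set mu : ℝ := (4:ℝ) ^ (-(3*α)) with hmudef
  have hlam1 : 1 < lam := by
    rw [hlamdef, Real.one_lt_rpow_iff_of_pos (by norm_num)]
    left; constructor <;> [norm_num; positivity]
  have hmu0 : 0 < mu := by rw [hmudef]; positivity
  have hmu1 : mu < 1 := Real.rpow_lt_one_of_one_lt_of_neg (by norm_num) (by linarith)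
  have hlaminv : lam⁻¹ < 1 := inv_lt_one_of_one_lt₀ hlam1
  have hlaminv0 : (0:ℝ) ≤ lam⁻¹ := by positivity
  have hlam4 : lam ^ 4 = (4:ℝ) ^ (3*α) := by
    rw [hlamdef, ← Real.rpow_natCast (_ ^ _) 4, ← Real.rpow_mul (by norm_num)]
    norm_num
  have hCC : Cpt α = 1 / (1 - lam⁻¹) + 1 + 1 / (1 - mu) := rfl
  have hmuinv : (4:ℝ) ^ (3*α) = mu⁻¹ := by
    rw [hmudef, ← Real.rpow_neg (by norm_num)]
    norm_num
  rcases eq_or_lt_of_le hu0 with hu0' | hu0'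
  · -- u = 0
    refine ⟨0, by exact Finset.mem_range.mpr hm, ?_⟩
    have hz : ∀ j, hh α L u j = 0 := by
      intro j
      unfold hh
      rw [← hu0', zero_pow (ss_pos hL j).ne', mul_zero]
    rw [Finset.sum_congr rfl (fun j _ => hz j), Finset.sum_const, smul_zero, hz 0, mul_zero]
  · -- u > 0
    have hhpos : ∀ j, 0 < hh α L u j := by
      intro j
      unfold hh
      have : (0:ℝ) < ((ss L j : ℕ):ℝ) := by exact_mod_cast ss_pos hL j
      positivity
    have hrpos : ∀ j, 0 < rr α L u j := by
      intro j; unfold rr; positivity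
    obtain ⟨j0, hj0mem, hj0max⟩ := Finset.exists_max_image (range m) (hh α L u) ⟨0, by exact Finset.mem_range.mpr hm⟩
    have hj0m : j0 < m := Finset.mem_range.mp hj0mem
    refine ⟨j0, hj0mem, ?_⟩
    set H := hh α L u with hHdef
    set R := rr α L u with hRdef
    have hstep : ∀ j, H (j+1) = R j * H j := fun j => hh_succ α L u j
    -- left chain
    have left_claim : ∀ d, d < j0 → 1 ≤ R (j0 - 1 - d) ∧ H (j0 - 1 - d) ≤ H j0 * (lam⁻¹) ^ d := by
      intro d
      induction d with
      | zero =>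
        intro hd
        have h1 : j0 - 1 - 0 + 1 = j0 := by omega
        constructor
        · have h3 := hj0max (j0 - 1 - 0) (Finset.mem_range.mpr (by omega))
          have h2 : H j0 = R (j0 - 1 - 0) * H (j0 - 1 - 0) := by rw [← hstep, h1]
          nlinarith [hhpos (j0 - 1 - 0)]
        · simpa using hj0max (j0 - 1 - 0) (Finset.mem_range.mpr (by omega))
      | succ d ih =>
        intro hd
        obtain ⟨hR, hH⟩ := ih (by omega)
        have hidx : j0 - 1 - (d+1) + 1 = j0 - 1 - d := by omega
        have hRid := rr_id α L u (j0 - 1 - (d+1))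
        rw [hidx] at hRid
        have hR4 : lam ^ 4 ≤ R (j0 - 1 - (d+1)) ^ 4 := by
          rw [hRid, hlam4]
          nlinarith [Real.rpow_pos_of_pos (show (0:ℝ) < 4 by norm_num) (3*α)]
        have hRlam : lam ≤ R (j0 - 1 - (d+1)) :=
          le_of_pow_le_pow_left₀ (by norm_num) (hrpos _).le hR4
        refine ⟨by linarith, ?_⟩
        have hs : H (j0 - 1 - d) = R (j0 - 1 - (d+1)) * H (j0 - 1 - (d+1)) := by
          rw [← hstep, hidx]
        have h1 : lam * H (j0 - 1 - (d+1)) ≤ H j0 * lam⁻¹ ^ d := by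
          calc lam * H (j0 - 1 - (d+1)) ≤ R (j0 - 1 - (d+1)) * H (j0 - 1 - (d+1)) := by
                nlinarith [hhpos (j0 - 1 - (d+1))]
          _ = H (j0 - 1 - d) := hs.symm
          _ ≤ H j0 * lam⁻¹ ^ d := hH
        calc H (j0 - 1 - (d+1)) = (lam * H (j0 - 1 - (d+1))) * lam⁻¹ := by
              field_simp
        _ ≤ (H j0 * lam⁻¹ ^ d) * lam⁻¹ := mul_le_mul_of_nonneg_right h1 hlaminv0
        _ = H j0 * lam⁻¹ ^ (d+1) := by rw [pow_succ]; ring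
    -- right chains
    have rchain : ∀ i, j0 + 1 < m → R (j0 + 1 + i) ≤ mu := by
      intro i hj1
      induction i with
      | zero =>
        have hR0 : R j0 ≤ 1 := by
          have h3 := hj0max (j0 + 1) (Finset.mem_range.mpr hj1)
          have h2 : H (j0 + 1) = R j0 * H j0 := hstep j0
          nlinarith [hhpos j0]
        have hRid := rr_id α L u j0
        rw [hmuinv] at hRid
        have : R (j0 + 1) = mu * R j0 ^ 4 := by
          rw [← hRdef] at hRid
          field_simp at hRid ⊢
          linarith [hRid]
        rw [this]
        nlinarith [hrpos j0, pow_le_one₀ (hrpos j0).le hR0 (n := 4)]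
      | succ i ih =>
        have ih' := ih
        have hRid := rr_id α L u (j0 + 1 + i)
        rw [hmuinv] at hRid
        have heq : R (j0 + 1 + (i+1)) = mu * R (j0 + 1 + i) ^ 4 := by
          rw [← hRdef, show j0 + 1 + (i+1) = (j0 + 1 + i) + 1 by ring] at *
          field_simp at hRid ⊢
          linarith [hRid]
        rw [heq]
        have h4 : R (j0 + 1 + i) ^ 4 ≤ 1 := pow_le_one₀ (hrpos _).le (le_trans ih' hmu1.le)
        nlinarith
    have hchain : ∀ i, j0 + 1 + i < m → H (j0 + 1 + i) ≤ H j0 * mu ^ i := by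
      intro i
      induction i with
      | zero =>
        intro hi
        simpa using hj0max (j0 + 1) (Finset.mem_range.mpr (by omega))
      | succ i ih =>
        intro hi
        have ih' := ih (by omega)
        have hr := rchain i (by omega)
        have h2 : H (j0 + 1 + (i+1)) = R (j0 + 1 + i) * H (j0 + 1 + i) := by
          rw [show j0 + 1 + (i+1) = (j0 + 1 + i) + 1 by ring, hstep]
        rw [h2, pow_succ]
        calc R (j0 + 1 + i) * H (j0 + 1 + i) ≤ mu * (H j0 * mu ^ i) := by
              apply mul_le_mul hr ih' (hhpos _).le hmu0.le
        _ = H j0 * (mu ^ i * mu) := by ring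
    -- assemble
    have geom_lam : ∑ d ∈ range j0, (lam⁻¹) ^ d ≤ 1 / (1 - lam⁻¹) :=
      geomSumLe _ hlaminv0 hlaminv j0
    have geom_mu : ∀ nn : ℕ, ∑ i ∈ range nn, mu ^ i ≤ 1 / (1 - mu) := fun nn =>
      geomSumLe _ hmu0.le hmu1 nn
    have hsplit : ∑ j ∈ range m, H j = ∑ j ∈ range j0, H j + ∑ j ∈ Ico j0 m, H j :=
      (Finset.sum_range_add_sum_Ico H hj0m.le).symm
    have hleft : ∑ j ∈ range j0, H j ≤ H j0 * (1 / (1 - lam⁻¹)) := by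
      rw [← Finset.sum_range_reflect]
      calc ∑ d ∈ range j0, H (j0 - 1 - d) ≤ ∑ d ∈ range j0, H j0 * (lam⁻¹) ^ d := by
            apply Finset.sum_le_sum
            intro d hd
            exact (left_claim d (Finset.mem_range.mp hd)).2
      _ = H j0 * ∑ d ∈ range j0, (lam⁻¹) ^ d := by rw [Finset.mul_sum]
      _ ≤ H j0 * (1 / (1 - lam⁻¹)) := by
            apply mul_le_mul_of_nonneg_left geom_lam (hhpos j0).le
    have hright : ∑ j ∈ Ico j0 m, H j ≤ H j0 * (1 + 1 / (1 - mu)) := by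
      rw [Finset.sum_Ico_eq_sum_range]
      have hmj0 : m - j0 = (m - j0 - 1) + 1 := by omega
      rw [hmj0, Finset.sum_range_succ' (fun kk => H (j0 + kk)) (m - j0 - 1)]
      simp only [add_zero]
      have h2 : ∑ i ∈ range (m - j0 - 1), H (j0 + (i + 1)) ≤ H j0 * (1 / (1 - mu)) := by
        calc ∑ i ∈ range (m - j0 - 1), H (j0 + (i + 1)) ≤ ∑ i ∈ range (m - j0 - 1), H j0 * mu ^ i := by
              apply Finset.sum_le_sum
              intro i hi
              have : j0 + 1 + i < m := by
                have := Finset.mem_range.mp hi; omega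
              have := hchain i this
              calc H (j0 + (i+1)) = H (j0 + 1 + i) := by rw [show j0 + (i+1) = j0 + 1 + i from by omega]
              _ ≤ H j0 * mu ^ i := this
        _ = H j0 * ∑ i ∈ range (m - j0 - 1), mu ^ i := by rw [Finset.mul_sum]
        _ ≤ H j0 * (1 / (1 - mu)) := mul_le_mul_of_nonneg_left (geom_mu _) (hhpos j0).le
      linarith
    rw [hsplit, hCC]
    calc ∑ j ∈ range j0, H j + ∑ j ∈ Ico j0 m, H j
        ≤ H j0 * (1 / (1 - lam⁻¹)) + H j0 * (1 + 1 / (1 - mu)) := add_le_add hleft hright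
    _ = (1 / (1 - lam⁻¹) + 1 + 1 / (1 - mu)) * H j0 := by ring



noncomputable def gco (p : ℝ) (L j : ℕ) : ℝ := ((ss L j : ℕ):ℝ) ^ (1/p) / 2 ^ (ss L j)

noncomputable def PP (p : ℝ) (L m : ℕ) : ℝ[X] :=
  ∑ j ∈ range m, C (gco p L j) * (X + C 1) ^ (ss L j)

lemma gco_pos {p : ℝ} {L : ℕ} (hL : 1 ≤ L) (j : ℕ) : 0 < gco p L j := by
  unfold gco
  have h1 : (0:ℝ) < ((ss L j : ℕ):ℝ) := by
    have : 0 < ss L j := Nat.mul_pos hL (Nat.pow_pos (by norm_num))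
    exact_mod_cast this
  positivity

lemma iter_deriv_block (c : ℝ) (s : ℕ) : ∀ mm : ℕ,
    derivative^[mm] (C c * (X + C 1 : ℝ[X]) ^ s)
      = C (c * (s.descFactorial mm : ℕ)) * (X + C 1) ^ (s - mm) := by
  intro mm
  induction mm with
  | zero => simp
  | succ mm ih =>
    rw [Function.iterate_succ_apply', ih, derivative_C_mul, derivative_pow,
      derivative_X_add_C, Nat.descFactorial_succ]
    push_cast
    rw [show s - (mm + 1) = s - mm - 1 from by omega, mul_one, ← mul_assoc, ← C_mul]
    congr 2
    ring

lemma iter_deriv_sum {m : ℕ} (f : ℕ → ℝ[X]) : ∀ mm : ℕ,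
    derivative^[mm] (∑ j ∈ range m, f j) = ∑ j ∈ range m, derivative^[mm] (f j) := by
  intro mm
  induction mm with
  | zero => simp
  | succ mm ih =>
    rw [Function.iterate_succ_apply', ih, derivative_sum]
    exact Finset.sum_congr rfl fun j _ => (Function.iterate_succ_apply' _ _ _).symm

lemma iter_deriv_PP (p : ℝ) (L m mm : ℕ) :
    derivative^[mm] (PP p L m)
      = ∑ j ∈ range m, C (gco p L j * ((ss L j).descFactorial mm : ℕ)) * (X + C 1) ^ (ss L j - mm) := by
  unfold PP
  rw [iter_deriv_sum]
  exact Finset.sum_congr rfl fun j _ => iter_deriv_block _ _ _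

lemma eval_iter_deriv_PP (p : ℝ) (L m mm : ℕ) (x : ℝ) :
    (derivative^[mm] (PP p L m)).eval x
      = ∑ j ∈ range m, gco p L j * ((ss L j).descFactorial mm : ℕ) * (x + 1) ^ (ss L j - mm) := by
  rw [iter_deriv_PP]
  rw [eval_finset_sum]
  exact Finset.sum_congr rfl fun j _ => by simp

lemma eval_iter_deriv_PP_nonneg {p : ℝ} {L : ℕ} (hL : 1 ≤ L) (m mm : ℕ) {x : ℝ}
    (hx : -1 ≤ x) : 0 ≤ (derivative^[mm] (PP p L m)).eval x := by
  rw [eval_iter_deriv_PP]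
  apply Finset.sum_nonneg
  intro j _
  have h1 : (0:ℝ) ≤ x + 1 := by linarith
  have h2 : (0:ℝ) ≤ (((ss L j).descFactorial mm : ℕ):ℝ) := by positivity
  have := (gco_pos hL j (p := p)).le
  positivity

lemma natDegree_PP_le (p : ℝ) (L m : ℕ) : (PP p L m).natDegree ≤ L * 4 ^ m := by
  unfold PP
  apply Polynomial.natDegree_sum_le_of_forall_le
  intro j hj
  refine le_trans (natDegree_C_mul_le _ _) (le_trans natDegree_pow_le ?_)
  have : (X + C (1:ℝ)).natDegree = 1 := natDegree_X_add_C 1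
  rw [this, mul_one]
  unfold ss
  have : 4 ^ (j + 1) ≤ 4 ^ m := Nat.pow_le_pow_right (by norm_num) (Finset.mem_range.mp hj)
  exact Nat.mul_le_mul_left L this


lemma eval_PP_eq_sum_hh (p : ℝ) (L m : ℕ) (x : ℝ) :
    (PP p L m).eval x = ∑ j ∈ range m, hh (1/p) L ((x+1)/2) j := by
  have h := eval_iter_deriv_PP p L m 0 x
  simp only [Function.iterate_zero, id_eq, Nat.descFactorial_zero, Nat.cast_one, mul_one,
    Nat.sub_zero] at h
  rw [h]
  refine Finset.sum_congr rfl fun j _ => ?_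
  unfold gco hh
  rw [div_pow]
  field_simp


lemma int_block (c : ℝ) (hc : 0 < c) :
    (∫ x in (-1:ℝ)..1, ((x+1)/2) ^ c) = 2/(c+1) := by
  have h1 : (∫ x in (-1:ℝ)..1, ((x+1)/2) ^ c) = ∫ y in (0:ℝ)..2, (y/2)^c := by
    have := intervalIntegral.integral_comp_add_right (a := (-1:ℝ)) (b := 1) (fun y => (y/2)^c) 1
    norm_num at this
    exact this
  rw [h1]
  have h2 : (∫ y in (0:ℝ)..2, (y/2)^c) = ∫ y in (0:ℝ)..2, (1/2^c) * y^c := by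
    apply intervalIntegral.integral_congr
    intro y hy
    rw [Set.uIcc_of_le (by norm_num : (0:ℝ) ≤ 2)] at hy
    show (y/2)^c = 1/2^c * y^c
    rw [Real.div_rpow hy.1 (by norm_num : (0:ℝ) ≤ 2)]
    ring
  rw [h2, intervalIntegral.integral_const_mul, integral_rpow (Or.inl (by linarith))]
  rw [Real.zero_rpow (by linarith : c + 1 ≠ 0),
    Real.rpow_add (by norm_num : (0:ℝ) < 2), Real.rpow_one]
  have h3 : (2:ℝ)^c ≠ 0 := by positivity
  field_simp
  ring

lemma sum_int_le {F : ℝ → ℝ} (hF : Continuous F) (hF0 : ∀ x, 0 ≤ F x)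
    (a b : ℕ → ℝ)
    (h1 : ∀ j, -1 ≤ a j) (h2 : ∀ j, a j ≤ b j) (h3 : ∀ j, b j ≤ 1)
    (h4 : ∀ j, b j ≤ a (j+1)) (m : ℕ) :
    ∑ j ∈ range m, (∫ x in (a j)..(b j), F x) ≤ ∫ x in (-1:ℝ)..1, F x := by
  have hInt : ∀ u v : ℝ, IntervalIntegrable F volume u v := fun u v => hF.intervalIntegrable u v
  have hnn : ∀ u v : ℝ, u ≤ v → 0 ≤ ∫ x in u..v, F x := fun u v huv =>
    intervalIntegral.integral_nonneg huv (fun x _ => hF0 x)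
  set e : ℕ → ℝ := fun mm => Nat.rec (-1:ℝ) (fun j _ => b j) mm with he
  have he0 : e 0 = -1 := rfl
  have hes : ∀ j, e (j+1) = b j := fun j => rfl
  have hea : ∀ j, e j ≤ a j := by
    intro j; cases j with
    | zero => rw [he0]; exact h1 0
    | succ j => rw [hes]; exact h4 j
  have he1 : ∀ j, e j ≤ 1 := by
    intro j; cases j with
    | zero => rw [he0]; norm_num
    | succ j => rw [hes]; exact h3 _
  have key : ∀ mm, ∑ j ∈ range mm, (∫ x in (a j)..(b j), F x) ≤ ∫ x in (-1:ℝ)..(e mm), F x := by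
    intro mm
    induction mm with
    | zero => simp [he0]
    | succ mm ih =>
      rw [Finset.sum_range_succ, hes]
      have hadd1 : (∫ x in (-1:ℝ)..(e mm), F x) + (∫ x in (e mm)..(a mm), F x)
          = ∫ x in (-1:ℝ)..(a mm), F x :=
        intervalIntegral.integral_add_adjacent_intervals (hInt _ _) (hInt _ _)
      have hadd2 : (∫ x in (-1:ℝ)..(a mm), F x) + (∫ x in (a mm)..(b mm), F x)
          = ∫ x in (-1:ℝ)..(b mm), F x :=
        intervalIntegral.integral_add_adjacent_intervals (hInt _ _) (hInt _ _)
      have h5 : 0 ≤ ∫ x in (e mm)..(a mm), F x := hnn _ _ (hea mm)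
      linarith
  have hlast : (∫ x in (-1:ℝ)..(e m), F x) ≤ ∫ x in (-1:ℝ)..1, F x := by
    have hadd : (∫ x in (-1:ℝ)..(e m), F x) + (∫ x in (e m)..1, F x) = ∫ x in (-1:ℝ)..1, F x :=
      intervalIntegral.integral_add_adjacent_intervals (hInt _ _) (hInt _ _)
    have := hnn _ _ (he1 m)
    linarith
  exact le_trans (key m) hlast

lemma desc_ge (n : ℕ) : ∀ k, k ≤ n → (n - k)^k ≤ n.descFactorial k := by
  intro k
  induction k with
  | zero => simp
  | succ k ih =>
    intro hk
    rw [Nat.descFactorial_succ]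
    calc (n - (k+1))^(k+1) ≤ (n - k)^(k+1) := Nat.pow_le_pow_left (by omega) _
    _ = (n - k) * (n - k)^k := by rw [pow_succ]; ring
    _ ≤ (n - k) * n.descFactorial k := Nat.mul_le_mul_left _ (ih (by omega))

lemma Cpt_pos {α : ℝ} (hα : 0 < α) : 0 < Cpt α := by
  unfold Cpt
  have hlam1 : 1 < (4:ℝ)^((3*α)/4) := by
    rw [Real.one_lt_rpow_iff_of_pos (by norm_num)]
    left; constructor <;> [norm_num; positivity]
  have hmu1 : (4:ℝ)^(-(3*α)) < 1 :=
    Real.rpow_lt_one_of_one_lt_of_neg (by norm_num) (by linarith)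
  have hmu0 : (0:ℝ) < (4:ℝ)^(-(3*α)) := by positivity
  have h1 : ((4:ℝ)^((3*α)/4))⁻¹ < 1 := inv_lt_one_of_one_lt₀ hlam1
  have h2 : (0:ℝ) < ((4:ℝ)^((3*α)/4))⁻¹ := by positivity
  have g1 : (0:ℝ) < 1 / (1 - ((4:ℝ)^((3*α)/4))⁻¹) := div_pos one_pos (by linarith)
  have g2 : (0:ℝ) < 1 / (1 - (4:ℝ)^(-(3*α))) := div_pos one_pos (by linarith)
  linarith

lemma hh_nonneg (α : ℝ) (L : ℕ) {u : ℝ} (hu : 0 ≤ u) (j : ℕ) : 0 ≤ hh α L u j := by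
  unfold hh
  have : (0:ℝ) ≤ ((ss L j : ℕ):ℝ) := by positivity
  positivity

lemma eval_PP_nonneg {p : ℝ} (L m : ℕ) {x : ℝ} (hx : -1 ≤ x) : 0 ≤ (PP p L m).eval x := by
  rw [eval_PP_eq_sum_hh]
  exact Finset.sum_nonneg fun j _ => hh_nonneg _ _ (by linarith) j

lemma Jp_upper (p : ℝ) (hp : 0 < p) (L m : ℕ) (hL : 1 ≤ L) (hm : 1 ≤ m) :
    (∫ x in (-1:ℝ)..1, |(PP p L m).eval x| ^ p)
      ≤ (Cpt (1/p)) ^ p * (2/p) * m := by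
  have hα : 0 < 1/p := by positivity
  have hC := Cpt_pos hα
  set ψ : ℝ → ℝ := fun x =>
    (Cpt (1/p)) ^ p * ∑ j ∈ range m, ((ss L j : ℕ):ℝ) * ((x+1)/2) ^ (((ss L j : ℕ):ℝ) * p)
    with hψ
  have hsp : ∀ j, (0:ℝ) < ((ss L j : ℕ):ℝ) := by
    intro j
    exact_mod_cast Nat.mul_pos hL (Nat.pow_pos (by norm_num))
  -- pointwise bound
  have hptw : ∀ x ∈ Set.Icc (-1:ℝ) 1, |(PP p L m).eval x| ^ p ≤ ψ x := by
    intro x hx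
    obtain ⟨hx1, hx2⟩ := hx
    set u : ℝ := (x+1)/2 with hu
    have hu0 : 0 ≤ u := by rw [hu]; linarith
    have hu1 : u ≤ 1 := by rw [hu]; linarith
    have heval : (PP p L m).eval x = ∑ j ∈ range m, hh (1/p) L u j := eval_PP_eq_sum_hh p L m x
    have hev0 : 0 ≤ (PP p L m).eval x := eval_PP_nonneg L m hx1
    rw [abs_of_nonneg hev0, heval]
    obtain ⟨j0, hj0mem, hj0⟩ := ptwise (1/p) hα L m hL hm u hu0 hu1
    have hsum0 : 0 ≤ ∑ j ∈ range m, hh (1/p) L u j :=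
      Finset.sum_nonneg fun j _ => hh_nonneg _ _ hu0 j
    have step1 : (∑ j ∈ range m, hh (1/p) L u j) ^ p ≤ (Cpt (1/p) * hh (1/p) L u j0) ^ p :=
      Real.rpow_le_rpow hsum0 hj0 hp.le
    have step2 : (Cpt (1/p) * hh (1/p) L u j0) ^ p
        = (Cpt (1/p)) ^ p * (hh (1/p) L u j0) ^ p :=
      Real.mul_rpow hC.le (hh_nonneg _ _ hu0 j0)
    have hhj : ∀ j, (hh (1/p) L u j) ^ p = ((ss L j : ℕ):ℝ) * u ^ (((ss L j : ℕ):ℝ) * p) := by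
      intro j
      unfold hh
      rw [Real.mul_rpow (Real.rpow_nonneg (hsp j).le _) (pow_nonneg hu0 _)]
      rw [← Real.rpow_natCast u (ss L j), ← Real.rpow_mul hu0]
      rw [← Real.rpow_mul (hsp j).le]
      rw [one_div, inv_mul_cancel₀ hp.ne', Real.rpow_one]
    have step3 : (hh (1/p) L u j0) ^ p
        ≤ ∑ j ∈ range m, ((ss L j : ℕ):ℝ) * u ^ (((ss L j : ℕ):ℝ) * p) := by
      rw [hhj j0]
      apply Finset.single_le_sum (fun j _ => ?_) hj0mem
      have := Real.rpow_nonneg hu0 (((ss L j : ℕ):ℝ) * p)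
      positivity
    calc (∑ j ∈ range m, hh (1/p) L u j) ^ p
        ≤ (Cpt (1/p)) ^ p * (hh (1/p) L u j0) ^ p := by rw [← step2]; exact step1
    _ ≤ ψ x := by
        rw [hψ]
        exact mul_le_mul_of_nonneg_left step3 (by positivity)
  -- integrability
  have hcont1 : Continuous fun x => |(PP p L m).eval x| ^ p := by
    apply Continuous.rpow_const
    · exact continuous_abs.comp (PP p L m).continuous
    · intro x; right; exact hp.le
  have hcont2 : Continuous ψ := by
    rw [hψ]
    apply Continuous.mul continuous_const
    apply continuous_finset_sum
    intro j _
    apply Continuous.mul continuous_const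
    apply Continuous.rpow_const (by continuity)
    intro x; right; positivity
  have hmono := intervalIntegral.integral_mono_on (μ := volume) (by norm_num : (-1:ℝ) ≤ 1)
    (hcont1.intervalIntegrable _ _) (hcont2.intervalIntegrable _ _) hptw
  refine le_trans hmono ?_
  -- compute ∫ ψ
  have hint : ∀ j ∈ range m, IntervalIntegrable
      (fun x => ((ss L j : ℕ):ℝ) * ((x+1)/2) ^ (((ss L j : ℕ):ℝ) * p)) volume (-1) 1 := by
    intro j _
    apply Continuous.intervalIntegrable
    apply Continuous.mul continuous_const
    apply Continuous.rpow_const (by continuity)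
    intro x; right; positivity
  have hψint : (∫ x in (-1:ℝ)..1, ψ x)
      = (Cpt (1/p)) ^ p * ∑ j ∈ range m,
          ((ss L j : ℕ):ℝ) * (2 / (((ss L j : ℕ):ℝ) * p + 1)) := by
    rw [hψ, intervalIntegral.integral_const_mul, intervalIntegral.integral_finset_sum hint]
    congr 1
    refine Finset.sum_congr rfl fun j _ => ?_
    rw [intervalIntegral.integral_const_mul, int_block _ (mul_pos (hsp j) hp)]
  rw [hψint]
  have hbound : ∑ j ∈ range m, ((ss L j : ℕ):ℝ) * (2 / (((ss L j : ℕ):ℝ) * p + 1))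
      ≤ m * (2/p) := by
    calc ∑ j ∈ range m, ((ss L j : ℕ):ℝ) * (2 / (((ss L j : ℕ):ℝ) * p + 1))
        ≤ ∑ _j ∈ range m, (2/p) := by
          apply Finset.sum_le_sum
          intro j _
          have hs := hsp j
          rw [mul_div_assoc'] at *
          rw [div_le_div_iff₀ (by positivity) hp]
          nlinarith
    _ = m * (2/p) := by rw [Finset.sum_const, Finset.card_range]; ring
  calc (Cpt (1/p))^p * ∑ j ∈ range m, ((ss L j : ℕ):ℝ) * (2 / (((ss L j : ℕ):ℝ) * p + 1))
      ≤ (Cpt (1/p))^p * ((m:ℝ) * (2/p)) := by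
        apply mul_le_mul_of_nonneg_left hbound (by positivity)
  _ = (Cpt (1/p))^p * (2/p) * m := by ring

set_option maxHeartbeats 1000000 in
lemma Jq_lower (p q : ℝ) (hp : 0 < p) (hq : 0 < q) (l m : ℕ) (hl1 : 1 ≤ l) (hm : 1 ≤ m)
    (hpq : ((l:ℝ) + 1/p) * q = 1) :
    (m:ℝ) * (((2:ℝ)^(2*l+1))⁻¹ ^ q / 4)
      ≤ ∫ x in (-1:ℝ)..1, |(derivative^[l] (PP p l m)).eval x| ^ q := by
  set E : ℝ → ℝ := fun x => (derivative^[l] (PP p l m)).eval x with hE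
  set F : ℝ → ℝ := fun x => |E x| ^ q with hF
  set bq : ℝ := ((2:ℝ)^(2*l+1))⁻¹ ^ q with hbq
  have hbq0 : 0 < bq := by
    rw [hbq]; apply Real.rpow_pos_of_pos; positivity
  have hFcont : Continuous F := by
    rw [hF]
    exact (continuous_abs.comp (Polynomial.continuous _)).rpow_const (fun x => Or.inr hq.le)
  have hF0 : ∀ x, 0 ≤ F x := fun x => Real.rpow_nonneg (abs_nonneg _) q
  have hSnat : ∀ j, 4 * l ≤ ss l j := by
    intro j
    unfold ss
    calc 4 * l = l * 4 ^ 1 := by ring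
    _ ≤ l * 4 ^ (j+1) := Nat.mul_le_mul_left l (Nat.pow_le_pow_right (by norm_num) (by omega))
  have hS : ∀ j, (0:ℝ) < ((ss l j : ℕ):ℝ) := by
    intro j
    have : 0 < ss l j := by have := hSnat j; omega
    exact_mod_cast this
  have hS4l : ∀ j, 4 * (l:ℝ) ≤ ((ss l j : ℕ):ℝ) := by
    intro j; exact_mod_cast hSnat j
  set a : ℕ → ℝ := fun j => 2 * (2:ℝ)^(-(1/((ss l j : ℕ):ℝ))) - 1 with ha
  set b : ℕ → ℝ := fun j => 2 * (2:ℝ)^(-(1/(2*((ss l j : ℕ):ℝ)))) - 1 with hb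
  have h1 : ∀ j, (-1:ℝ) ≤ a j := by
    intro j
    have : (0:ℝ) < (2:ℝ)^(-(1/((ss l j : ℕ):ℝ))) := Real.rpow_pos_of_pos (by norm_num) _
    rw [ha]; simp only; linarith
  have h2 : ∀ j, a j ≤ b j := by
    intro j
    have hmono : (2:ℝ)^(-(1/((ss l j : ℕ):ℝ))) ≤ (2:ℝ)^(-(1/(2*((ss l j : ℕ):ℝ)))) := by
      apply Real.rpow_le_rpow_left_iff (by norm_num : (1:ℝ) < 2) |>.mpr
      have hSj := hS j
      have : 1/(2*((ss l j : ℕ):ℝ)) ≤ 1/((ss l j : ℕ):ℝ) := by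
        apply div_le_div_of_nonneg_left (by norm_num) hSj (by linarith)
      linarith
    rw [ha, hb]; simp only; linarith
  have h3 : ∀ j, b j ≤ 1 := by
    intro j
    have hSj := hS j
    have : (2:ℝ)^(-(1/(2*((ss l j : ℕ):ℝ)))) ≤ 1 := by
      apply Real.rpow_le_one_of_one_le_of_nonpos (by norm_num)
      have : 0 < 1/(2*((ss l j : ℕ):ℝ)) := by positivity
      linarith
    rw [hb]; simp only; linarith
  have h4 : ∀ j, b j ≤ a (j+1) := by
    intro j
    have hsucc : ((ss l (j+1) : ℕ):ℝ) = 4 * ((ss l j : ℕ):ℝ) := by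
      rw [ss_succ]; push_cast; ring
    have hSj := hS j
    have hmono : (2:ℝ)^(-(1/(2*((ss l j : ℕ):ℝ)))) ≤ (2:ℝ)^(-(1/((ss l (j+1) : ℕ):ℝ))) := by
      apply Real.rpow_le_rpow_left_iff (by norm_num : (1:ℝ) < 2) |>.mpr
      rw [hsucc]
      have : 1/(4*((ss l j : ℕ):ℝ)) ≤ 1/(2*((ss l j : ℕ):ℝ)) := by
        apply div_le_div_of_nonneg_left (by norm_num) (by linarith) (by linarith)
      linarith
    rw [ha, hb]; simp only; linarith
  -- lower bound on each interval
  have hlow : ∀ j ∈ range m, bq/4 ≤ ∫ x in (a j)..(b j), F x := by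
    intro j hjm
    set S : ℝ := ((ss l j : ℕ):ℝ) with hSdef
    have hSj : 0 < S := hS j
    have hS4 : 4 * (l:ℝ) ≤ S := hS4l j
    have hl0 : (0:ℝ) < l := by exact_mod_cast hl1
    -- pointwise lower bound on Icc
    have hTq : (S ^ (1/p) * S ^ l * ((2:ℝ)^(2*l+1))⁻¹) ^ q = S * bq := by
      rw [Real.mul_rpow (by positivity) (by positivity)]
      rw [← hbq]
      congr 1
      rw [← Real.rpow_natCast S l, ← Real.rpow_add hSj, ← Real.rpow_mul hSj.le]
      rw [show (1/p + (l:ℕ)) * q = ((l:ℝ) + 1/p) * q by push_cast; ring, hpq, Real.rpow_one]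
    have hptw : ∀ x ∈ Set.Icc (a j) (b j), S * bq ≤ F x := by
      intro x hx
      have hxm1 : (-1:ℝ) ≤ x := le_trans (h1 j) hx.1
      have hE0 : 0 ≤ E x := eval_iter_deriv_PP_nonneg hl1 m l hxm1
      have hFx : F x = E x ^ q := by rw [hF]; simp only; rw [abs_of_nonneg hE0]
      set n : ℕ := ss l j - l with hn
      have hln : l ≤ ss l j := by have := hSnat j; omega
      have hxge : 2 * (2:ℝ)^(-(1/S)) ≤ x + 1 := by
        have := hx.1
        rw [ha] at this; simp only at this
        rw [hSdef]; linarith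
      have hw0 : (0:ℝ) ≤ 2 * (2:ℝ)^(-(1/S)) := by positivity
      -- bound the j-th term from below
      have hpow : (2 * (2:ℝ)^(-(1/S)))^n ≤ (x+1)^n := pow_le_pow_left₀ hw0 hxge n
      have hsplitpow : (2 * (2:ℝ)^(-(1/S)))^n = 2^n * (2:ℝ)^(-(1/S) * n) := by
        rw [mul_pow]
        congr 1
        rw [← Real.rpow_natCast ((2:ℝ)^(-(1/S))) n, ← Real.rpow_mul (by norm_num)]
      have h2n : (1:ℝ)/2 ≤ (2:ℝ)^(-(1/S) * n) := by
        have hnS : (n:ℝ) ≤ S := by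
          rw [hSdef, hn]
          have : (ss l j - l : ℕ) ≤ ss l j := by omega
          exact_mod_cast this
        have hexp : (-1:ℝ) ≤ -(1/S) * n := by
          rw [neg_mul, neg_le_neg_iff]
          rw [div_mul_eq_mul_div, one_mul, div_le_one hSj]
          exact hnS
        calc (1:ℝ)/2 = (2:ℝ)^(-1:ℝ) := by
              rw [Real.rpow_neg_one]; norm_num
        _ ≤ (2:ℝ)^(-(1/S) * n) :=
              (Real.rpow_le_rpow_left_iff (by norm_num : (1:ℝ) < 2)).mpr hexp
      have hdF : (S/2)^l ≤ (((ss l j).descFactorial l : ℕ):ℝ) := by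
        have hnat : (ss l j - l)^l ≤ (ss l j).descFactorial l := desc_ge _ l hln
        have hcast : (((ss l j - l : ℕ)):ℝ) = S - l := by
          rw [hSdef]; push_cast [hln]; ring
        calc (S/2)^l ≤ (S - l)^l := by
              apply pow_le_pow_left₀ (by linarith) (by linarith) l
        _ = (((ss l j - l:ℕ)):ℝ)^l := by rw [hcast]
        _ ≤ (((ss l j).descFactorial l : ℕ):ℝ) := by exact_mod_cast hnat
      have hterm : S ^ (1/p) * S ^ l * ((2:ℝ)^(2*l+1))⁻¹
          ≤ gco p l j * (((ss l j).descFactorial l : ℕ):ℝ) * (x+1)^n := by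
        have hgco : gco p l j = S ^ (1/p) / 2^(ss l j) := rfl
        have hgco0 : 0 < gco p l j := gco_pos hl1 j
        have hfac : gco p l j * ((S/2)^l) * (2^n * ((1:ℝ)/2))
            = S ^ (1/p) * S ^ l * ((2:ℝ)^(2*l+1))⁻¹ := by
          rw [hgco]
          have hss : (2:ℝ)^(ss l j) = 2^n * 2^l := by
            rw [← pow_add]
            congr 1
            omega
          rw [hss, div_pow]
          have h2l1 : (2:ℝ)^(2*l+1) = 2^l * 2^l * 2 := by
            rw [show 2*l+1 = l + l + 1 by ring, pow_add, pow_add, pow_one]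
          rw [h2l1]
          have c1 : (2:ℝ)^n ≠ 0 := by positivity
          have c2 : (2:ℝ)^l ≠ 0 := by positivity
          field_simp
        rw [← hfac]
        have hx1n : (0:ℝ) ≤ (x+1)^n := pow_nonneg (by linarith) n
        apply mul_le_mul
        · apply mul_le_mul_of_nonneg_left hdF hgco0.le
        · calc 2^n * ((1:ℝ)/2) ≤ 2^n * (2:ℝ)^(-(1/S) * n) := by
                apply mul_le_mul_of_nonneg_left h2n (by positivity)
          _ = (2 * (2:ℝ)^(-(1/S)))^n := hsplitpow.symm
          _ ≤ (x+1)^n := hpow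
        · positivity
        · positivity
      have hEterm : gco p l j * (((ss l j).descFactorial l : ℕ):ℝ) * (x+1)^n ≤ E x := by
        rw [hE]; simp only
        rw [eval_iter_deriv_PP]
        apply Finset.single_le_sum (f := fun i => gco p l i * (((ss l i).descFactorial l : ℕ):ℝ) * (x+1)^(ss l i - l)) (fun i _ => ?_) hjm
        have := (gco_pos hl1 i (p := p)).le
        have hx1 : (0:ℝ) ≤ x + 1 := by linarith
        positivity
      have hTE : S ^ (1/p) * S ^ l * ((2:ℝ)^(2*l+1))⁻¹ ≤ E x := le_trans hterm hEterm
      calc S * bq = (S ^ (1/p) * S ^ l * ((2:ℝ)^(2*l+1))⁻¹) ^ q := hTq.symm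
      _ ≤ E x ^ q := Real.rpow_le_rpow (by positivity) hTE hq.le
      _ = F x := hFx.symm
    -- width bound
    have hgap : 1/(4*S) ≤ b j - a j := by
      set aa : ℝ := 1/(2*S) with haa
      have haa0 : 0 < aa := by rw [haa]; positivity
      have hlr : (1:ℝ) ≤ (l:ℝ) := by exact_mod_cast hl1
      have hS1 : (1:ℝ) ≤ S := by linarith
      have haa1 : 2 * aa ≤ 1 := by
        rw [haa]
        rw [show 2 * (1/(2*S)) = 1/S by field_simp]
        rw [div_le_one hSj]
        linarith
      have hkey : (2:ℝ)^(-(1/S)) = (2:ℝ)^(-(2*aa)) := by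
        congr 1
        rw [haa]
        field_simp
      have hsum : (2:ℝ)^(-aa) = (2:ℝ)^(-(2*aa)) * (2:ℝ)^aa := by
        rw [← Real.rpow_add (by norm_num : (0:ℝ) < 2)]
        congr 1
        ring
      have h2a : (1:ℝ)/2 ≤ (2:ℝ)^(-(2*aa)) := by
        calc (1:ℝ)/2 = (2:ℝ)^(-1:ℝ) := by rw [Real.rpow_neg_one]; norm_num
        _ ≤ (2:ℝ)^(-(2*aa)) :=
            (Real.rpow_le_rpow_left_iff (by norm_num : (1:ℝ) < 2)).mpr (by linarith)
      have hexp2 : 1 + aa/2 ≤ (2:ℝ)^aa := by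
        rw [Real.rpow_def_of_pos (by norm_num : (0:ℝ) < 2)]
        have hlog := Real.log_two_gt_d9
        have := Real.add_one_le_exp (Real.log 2 * aa)
        nlinarith
      have hba : b j - a j = 2 * ((2:ℝ)^(-aa) - (2:ℝ)^(-(2*aa))) := by
        rw [ha, hb]; simp only
        rw [hkey, show -(1/(2*S)) = -aa by rw [haa]]
        ring
      rw [hba, hsum]
      have h2aa0 : (0:ℝ) < (2:ℝ)^(-(2*aa)) := Real.rpow_pos_of_pos (by norm_num) _
      have : aa/4 ≤ (2:ℝ)^(-(2*aa)) * ((2:ℝ)^aa - 1) := by nlinarith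
      have haaS : 1/(4*S) = aa/2 := by rw [haa]; field_simp; ring
      rw [haaS]
      nlinarith
    -- combine
    have hconst : (∫ _x in (a j)..(b j), S * bq) = (b j - a j) * (S * bq) := by
      rw [intervalIntegral.integral_const, smul_eq_mul]
    have hmono := intervalIntegral.integral_mono_on (μ := volume) (h2 j)
      (intervalIntegrable_const) (hFcont.intervalIntegrable _ _) hptw
    rw [hconst] at hmono
    calc bq/4 = (1/(4*S)) * (S * bq) := by field_simp
    _ ≤ (b j - a j) * (S * bq) := by
        apply mul_le_mul_of_nonneg_right hgap (by positivity)
    _ ≤ ∫ x in (a j)..(b j), F x := hmono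
  -- sum up
  have hsum := sum_int_le hFcont hF0 a b h1 h2 h3 h4 m
  have : (m:ℝ) * (bq/4) ≤ ∑ j ∈ range m, ∫ x in (a j)..(b j), F x := by
    calc (m:ℝ) * (bq/4) = ∑ _j ∈ range m, (bq/4) := by
          rw [Finset.sum_const, Finset.card_range, nsmul_eq_mul]
    _ ≤ ∑ j ∈ range m, ∫ x in (a j)..(b j), F x := Finset.sum_le_sum hlow
  calc (m:ℝ) * (bq/4) ≤ ∑ j ∈ range m, ∫ x in (a j)..(b j), F x := this
  _ ≤ ∫ x in (-1:ℝ)..1, F x := hsum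


set_option maxHeartbeats 1000000 in
/-- Lower bound in the critical case `l = 1/q - 1/p`: existence of extremal polynomials. -/
theorem stmt6 (p q : ℝ) (hp : 0 < p) (hq : 0 < q) (k l : ℕ) (hl1 : 1 ≤ l) (hlk : l ≤ k)
    (hl : (l : ℝ) = 1 / q - 1 / p) :
    ∃ c : ℝ, 0 < c ∧ ∃ N : ℕ, ∀ n : ℕ, N ≤ n → ∃ P : Polynomial ℝ, AbsMono P n k ∧
      0 < LqNorm (fun x => P.eval x) p (-1) 1 ∧
      c * (Real.log n) ^ l * LqNorm (fun x => P.eval x) p (-1) 1 ≤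
        LqNorm (fun x => (derivative^[l] P).eval x) q (-1) 1 := by
  have hα : 0 < 1/p := by positivity
  have hCpt := Cpt_pos hα
  set C2 : ℝ := ((Cpt (1/p))^p * (2/p)) ^ (1/p) with hC2
  have hC2pos : 0 < C2 := by
    rw [hC2]; apply Real.rpow_pos_of_pos; positivity
  set bq : ℝ := ((2:ℝ)^(2*l+1))⁻¹ ^ q with hbqdef
  have hbq0 : 0 < bq := Real.rpow_pos_of_pos (by positivity) q
  set c3 : ℝ := (bq/4) ^ (1/q) with hc3
  have hc30 : 0 < c3 := Real.rpow_pos_of_pos (by positivity) _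
  have h6l : (0:ℝ) < 6^l := by positivity
  refine ⟨c3 / (C2 * 6^l), by positivity, ?_⟩
  set B : ℕ := Nat.log 4 l + 1 with hB
  refine ⟨4^(2*B + 2), ?_⟩
  intro n hn
  set K : ℕ := Nat.log 4 n with hK
  have hn0 : n ≠ 0 := by
    intro h; rw [h] at hn
    have : 0 < 4^(2*B+2) := Nat.pow_pos (by norm_num)
    omega
  have hKge : 2*B + 2 ≤ K := (Nat.le_log_iff_pow_le (by norm_num) hn0).mpr hn
  set m : ℕ := K - B with hm
  have hm1 : 1 ≤ m := by omega
  have hmpos : (0:ℝ) < (m:ℝ) := by exact_mod_cast hm1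
  have hpq : ((l:ℝ) + 1/p) * q = 1 := by
    rw [hl]
    field_simp
    ring
  have h1q : 1/q = (l:ℝ) + 1/p := by rw [hl]; ring
  refine ⟨PP p l m, ⟨?_, ?_⟩, ?_, ?_⟩
  · -- degree
    refine le_trans (natDegree_PP_le p l m) ?_
    have hlB : l < 4^B := Nat.lt_pow_succ_log_self (by norm_num) l
    calc l * 4^m ≤ 4^B * 4^m := Nat.mul_le_mul_right _ hlB.le
    _ = 4^(B+m) := (pow_add 4 B m).symm
    _ ≤ 4^K := Nat.pow_le_pow_right (by norm_num) (by omega)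
    _ ≤ n := Nat.pow_log_le_self 4 hn0
  · -- derivatives nonneg
    intro mm _ x hx
    exact eval_iter_deriv_PP_nonneg hl1 m mm hx.1
  · -- positivity of L_p norm
    show (0:ℝ) < (∫ x in (-1:ℝ)..1, |(PP p l m).eval x| ^ p) ^ (1/p)
    apply Real.rpow_pos_of_pos
    apply intervalIntegral.intervalIntegral_pos_of_pos_on
    · exact ((continuous_abs.comp (Polynomial.continuous _)).rpow_const
        (fun x => Or.inr hp.le)).intervalIntegrable _ _
    · intro x hx
      have hev : 0 < (PP p l m).eval x := by
        rw [eval_PP_eq_sum_hh]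
        apply Finset.sum_pos (fun j _ => ?_) ⟨0, Finset.mem_range.mpr hm1⟩
        unfold hh
        have h1 : (0:ℝ) < ((ss l j : ℕ):ℝ) := by
          have : 0 < ss l j := Nat.mul_pos hl1 (Nat.pow_pos (by norm_num))
          exact_mod_cast this
        have h2 : (0:ℝ) < (x+1)/2 := by have := hx.1; linarith
        positivity
      exact Real.rpow_pos_of_pos (abs_pos.mpr hev.ne') p
    · norm_num
  · -- main inequality
    have hJp : (∫ x in (-1:ℝ)..1, |(PP p l m).eval x| ^ p)
        ≤ (Cpt (1/p)) ^ p * (2/p) * m := Jp_upper p hp l m hl1 hm1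
    have hJp0 : 0 ≤ ∫ x in (-1:ℝ)..1, |(PP p l m).eval x| ^ p :=
      intervalIntegral.integral_nonneg (by norm_num) (fun x _ => Real.rpow_nonneg (abs_nonneg _) p)
    have hNPle : LqNorm (fun x => (PP p l m).eval x) p (-1) 1 ≤ C2 * (m:ℝ)^(1/p) := by
      show (∫ x in (-1:ℝ)..1, |(PP p l m).eval x| ^ p) ^ (1/p) ≤ C2 * (m:ℝ)^(1/p)
      calc (∫ x in (-1:ℝ)..1, |(PP p l m).eval x| ^ p) ^ (1/p)
          ≤ ((Cpt (1/p)) ^ p * (2/p) * m) ^ (1/p) :=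
            Real.rpow_le_rpow hJp0 hJp (by positivity)
      _ = C2 * (m:ℝ)^(1/p) := by
            rw [hC2, ← Real.mul_rpow (by positivity) hmpos.le]
    have hNP0 : 0 ≤ LqNorm (fun x => (PP p l m).eval x) p (-1) 1 :=
      Real.rpow_nonneg hJp0 _
    have hJq := Jq_lower p q hp hq l m hl1 hm1 hpq
    have hNQge : c3 * ((m:ℝ)^l * (m:ℝ)^(1/p))
        ≤ LqNorm (fun x => (derivative^[l] (PP p l m)).eval x) q (-1) 1 := by
      show _ ≤ (∫ x in (-1:ℝ)..1, |(derivative^[l] (PP p l m)).eval x| ^ q) ^ (1/q)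
      have step : ((m:ℝ) * (bq/4)) ^ (1/q)
          ≤ (∫ x in (-1:ℝ)..1, |(derivative^[l] (PP p l m)).eval x| ^ q) ^ (1/q) :=
        Real.rpow_le_rpow (by positivity) hJq (by positivity)
      refine le_trans (le_of_eq ?_) step
      rw [Real.mul_rpow hmpos.le (by positivity), ← hc3]
      rw [h1q, Real.rpow_add hmpos, Real.rpow_natCast]
      ring
    -- log bound
    have hlogn : Real.log n ≤ 6 * m := by
      have hnlt : (n:ℝ) < ((4:ℕ):ℝ)^(K+1) := by
        exact_mod_cast Nat.lt_pow_succ_log_self (by norm_num : 1 < 4) n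
      have hlog4 : Real.log 4 ≤ 1.4 := by
        have h4 : (4:ℝ) = 2^2 := by norm_num
        rw [h4, Real.log_pow]
        have := Real.log_two_lt_d9
        push_cast
        nlinarith
      have hlog40 : 0 ≤ Real.log 4 := Real.log_nonneg (by norm_num)
      have h2 : Real.log n ≤ (K+1) * Real.log 4 := by
        calc Real.log n ≤ Real.log (((4:ℕ):ℝ)^(K+1)) := by
              apply Real.log_le_log (by exact_mod_cast Nat.pos_of_ne_zero hn0) hnlt.le
        _ = ((K+1:ℕ):ℝ) * Real.log ((4:ℕ):ℝ) := Real.log_pow _ _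
        _ = ((K:ℝ)+1) * Real.log 4 := by push_cast; norm_num
      have hKm : (K:ℝ) ≤ 2 * m := by
        have : K ≤ 2 * m := by omega
        exact_mod_cast this
      have hK1 : (1:ℝ) ≤ K := by
        have : 1 ≤ K := by omega
        exact_mod_cast this
      nlinarith
    have hlogn0 : 0 ≤ Real.log n :=
      Real.log_nonneg (by exact_mod_cast Nat.one_le_iff_ne_zero.mpr hn0)
    have hpowlog : (Real.log n)^l ≤ 6^l * (m:ℝ)^l := by
      calc (Real.log n)^l ≤ (6 * m)^l := pow_le_pow_left₀ hlogn0 hlogn l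
      _ = 6^l * (m:ℝ)^l := mul_pow 6 (m:ℝ) l
    -- combine
    set NP := LqNorm (fun x => (PP p l m).eval x) p (-1) 1
    set NQ := LqNorm (fun x => (derivative^[l] (PP p l m)).eval x) q (-1) 1
    have hml0 : (0:ℝ) ≤ (m:ℝ)^l := by positivity
    calc c3 / (C2 * 6^l) * (Real.log n)^l * NP
        ≤ c3 / (C2 * 6^l) * (6^l * (m:ℝ)^l) * (C2 * (m:ℝ)^(1/p)) := by
          apply mul_le_mul
          · exact mul_le_mul_of_nonneg_left hpowlog (by positivity)
          · exact hNPle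
          · exact hNP0
          · positivity
    _ = c3 * ((m:ℝ)^l * (m:ℝ)^(1/p)) := by
          field_simp
    _ ≤ NQ := hNQge
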